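/- arXiv:1605.00946 — 2 statements merged into one kernel-verified Lean document; each statement's English description precedes it below -/
import Mathlib

section
/- Let {D_I}_{I∈({1,...,n} choose 2)} be a family of positive real numbers satisfying the triangle inequalities. The family is co-graphlike (i.e., realized as the family of 2-weights of a pruned positive-weighted complete graph on vertex set {1,...,n}) if and only if D_{i,j} is indecomposable for all distinct i,j ∈ {1,...,n}. -/
open SimpleGraph

variable {V : Type*}

/-- weight of a walk: sum of the weights of its edges -/
noncomputable def walkWeight (G : SimpleGraph V) (w : Sym2 V → ℝ) {i j : V} (p : G.Walk i j) : ℝ :=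
  (p.edges.map w).sum

/-- the 2-weight: min over paths joining i and j -/
noncomputable def wdist (G : SimpleGraph V) (w : Sym2 V → ℝ) (i j : V) : ℝ :=
  sInf {x : ℝ | ∃ p : G.Walk i j, p.IsPath ∧ walkWeight G w p = x}

def Realizes (G : SimpleGraph V) (w : Sym2 V → ℝ) {i j : V} (p : G.Walk i j) : Prop :=
  p.IsPath ∧ walkWeight G w p = wdist G w i j

def UsefulEdge (G : SimpleGraph V) (w : Sym2 V → ℝ) (e : Sym2 V) : Prop :=
  ∃ a b : V, a ≠ b ∧ ∀ p : G.Walk a b, Realizes G w p → e ∈ p.edges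

def Pruned (G : SimpleGraph V) (w : Sym2 V → ℝ) : Prop :=
  ∀ e ∈ G.edgeSet, UsefulEdge G w e

def PosWeights (G : SimpleGraph V) (w : Sym2 V → ℝ) : Prop :=
  ∀ e ∈ G.edgeSet, 0 < w e

def Indec (G : SimpleGraph V) (w : Sym2 V → ℝ) (i j : V) : Prop :=
  ∀ z : V, z ≠ i → z ≠ j → wdist G w i j < wdist G w i z + wdist G w z j

def IsLeaf (G : SimpleGraph V) (v : V) : Prop := (G.neighborSet v).ncard = 1

def IsSnake (G : SimpleGraph V) : Prop :=
  G.IsTree ∧ {v : V | IsLeaf G v}.ncard = 2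

def IsCaterpillar (G : SimpleGraph V) : Prop :=
  G.IsTree ∧ ∃ (x₁ x₂ : V) (p : G.Walk x₁ x₂), p.IsPath ∧
    {v : V | v ∈ p.support} = {v : V | 2 ≤ (G.neighborSet v).ncard}

def IsPolygon {n : ℕ} [NeZero n] (G : SimpleGraph (Fin n)) : Prop :=
  ∃ σ : Equiv.Perm (Fin n), G.edgeSet = Set.range (fun i : Fin n => s(σ i, σ (i + 1)))

noncomputable def tmin (G : SimpleGraph V) (w : Sym2 V → ℝ) (x : V) : ℝ :=
  (1 / 2) * sInf {r : ℝ | ∃ y z : V, y ≠ x ∧ z ≠ x ∧ y ≠ z ∧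
    r = wdist G w x y + wdist G w x z - wdist G w y z}

def IsBipartiteOn (G : SimpleGraph V) (X Y : Set V) : Prop :=
  X ∩ Y = ∅ ∧ X ∪ Y = Set.univ ∧ ∀ a b : V, G.Adj a b → (a ∈ X ∧ b ∈ Y) ∨ (a ∈ Y ∧ b ∈ X)

noncomputable def chainSum {α : Type*} (D : α → α → ℝ) : List α → ℝ
  | [] => 0
  | [_] => 0
  | a :: b :: l => D a b + chainSum D (b :: l)

def FIndec {n : ℕ} (D : Fin n → Fin n → ℝ) (i j : Fin n) : Prop :=
  ∀ z : Fin n, z ≠ i → z ≠ j → D i j < D i z + D z j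

def TriangleIneq {n : ℕ} (D : Fin n → Fin n → ℝ) : Prop :=
  ∀ i j k : Fin n, i ≠ j → j ≠ k → i ≠ k → D i j ≤ D i k + D k j

def MaxTwice (x y z : ℝ) : Prop :=
  (x = y ∧ z ≤ x) ∨ (x = z ∧ y ≤ x) ∨ (y = z ∧ x ≤ y)

def FourPoint {n : ℕ} (D : Fin n → Fin n → ℝ) : Prop :=
  ∀ i j k h : Fin n, i ≠ j → i ≠ k → i ≠ h → j ≠ k → j ≠ h → k ≠ h →
    MaxTwice (D i j + D k h) (D i k + D j h) (D i h + D k j)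

def MedianFamily {n : ℕ} (D : Fin n → Fin n → ℝ) : Prop :=
  ∀ a b c : Fin n, ∃! m : Fin n,
    ∀ i ∈ ({a, b, c} : Set (Fin n)), ∀ j ∈ ({a, b, c} : Set (Fin n)), i ≠ j →
      D i j = D i m + D j m

noncomputable def tminF {n : ℕ} (D : Fin n → Fin n → ℝ) (x : Fin n) : ℝ :=
  (1 / 2) * sInf {r : ℝ | ∃ y z : Fin n, y ≠ x ∧ z ≠ x ∧ y ≠ z ∧ r = D x y + D x z - D y z}

def interiorSet {G : SimpleGraph V} {u v : V} (p : G.Walk u v) : Set V :=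
  {x : V | x ∈ p.support ∧ x ≠ u ∧ x ≠ v}

lemma walkWeight_append (G : SimpleGraph V) (w : Sym2 V → ℝ) {a b c : V}
    (p : G.Walk a b) (q : G.Walk b c) :
    walkWeight G w (p.append q) = walkWeight G w p + walkWeight G w q := by
  simp [walkWeight, SimpleGraph.Walk.edges_append]

lemma walkWeight_cons (G : SimpleGraph V) (w : Sym2 V → ℝ) {a b c : V}
    (h : G.Adj a b) (p : G.Walk b c) :
    walkWeight G w (SimpleGraph.Walk.cons h p) = w s(a, b) + walkWeight G w p := by
  simp [walkWeight]

lemma walkWeight_nonneg {G : SimpleGraph V} {w : Sym2 V → ℝ} (hw : PosWeights G w)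
    {a b : V} (p : G.Walk a b) : 0 ≤ walkWeight G w p := by
  apply List.sum_nonneg
  intro x hx
  obtain ⟨e, he, rfl⟩ := List.mem_map.mp hx
  exact (hw e (p.edges_subset_edgeSet he)).le

lemma weight_edge_le {G : SimpleGraph V} {w : Sym2 V → ℝ} (hw : PosWeights G w)
    {a b : V} {p : G.Walk a b} {e : Sym2 V} (he : e ∈ p.edges) :
    w e ≤ walkWeight G w p := by
  apply List.single_le_sum (l := p.edges.map w)
  · intro x hx
    obtain ⟨e', he', rfl⟩ := List.mem_map.mp hx
    exact (hw e' (p.edges_subset_edgeSet he')).le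
  · exact List.mem_map_of_mem he

lemma wdistSet_eq (G : SimpleGraph V) (w : Sym2 V → ℝ) (a b : V) :
    {x : ℝ | ∃ p : G.Walk a b, p.IsPath ∧ walkWeight G w p = x}
      = Set.range (fun p : G.Path a b => walkWeight G w (p : G.Walk a b)) := by
  ext x
  constructor
  · rintro ⟨p, hp, rfl⟩; exact ⟨⟨p, hp⟩, rfl⟩
  · rintro ⟨⟨p, hp⟩, rfl⟩; exact ⟨p, hp, rfl⟩

lemma wdistSet_finite (G : SimpleGraph V) [Fintype V] [DecidableEq V] [DecidableRel G.Adj]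
    (w : Sym2 V → ℝ) (a b : V) :
    {x : ℝ | ∃ p : G.Walk a b, p.IsPath ∧ walkWeight G w p = x}.Finite := by
  rw [wdistSet_eq]; exact Set.finite_range _

lemma wdist_le (G : SimpleGraph V) [Fintype V] [DecidableEq V] [DecidableRel G.Adj]
    (w : Sym2 V → ℝ) {a b : V} (p : G.Walk a b) (hp : p.IsPath) :
    wdist G w a b ≤ walkWeight G w p :=
  csInf_le (wdistSet_finite G w a b).bddBelow ⟨p, hp, rfl⟩

lemma exists_realizes (G : SimpleGraph V) [Fintype V] [DecidableEq V] [DecidableRel G.Adj]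
    (w : Sym2 V → ℝ) {a b : V} (p₀ : G.Walk a b) (hp₀ : p₀.IsPath) :
    ∃ p : G.Walk a b, Realizes G w p := by
  have hne : {x : ℝ | ∃ p : G.Walk a b, p.IsPath ∧ walkWeight G w p = x}.Nonempty :=
    ⟨walkWeight G w p₀, p₀, hp₀, rfl⟩
  have hmem := hne.csInf_mem (wdistSet_finite G w a b)
  obtain ⟨p, hp, he⟩ := hmem
  exact ⟨p, hp, he⟩

lemma walk_split {G : SimpleGraph V} {e : Sym2 V} {a b : V} (p : G.Walk a b)
    (hmem : e ∈ p.edges) :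
    ∃ (x y : V) (hxy : G.Adj x y) (q : G.Walk a x) (r : G.Walk y b),
      s(x, y) = e ∧ p = q.append (SimpleGraph.Walk.cons hxy r) := by
  induction p with
  | nil => simp at hmem
  | cons h p ih =>
    rw [SimpleGraph.Walk.edges_cons, List.mem_cons] at hmem
    rcases hmem with hmem | hmem
    · exact ⟨_, _, h, SimpleGraph.Walk.nil, p, hmem.symm, rfl⟩
    · obtain ⟨x, y, hxy, q, r, h1, h2⟩ := ih hmem
      exact ⟨x, y, hxy, SimpleGraph.Walk.cons h q, r, h1, by rw [h2]; rfl⟩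

lemma toFinset_sum_le {w : Sym2 V → ℝ} [DecidableEq (Sym2 V)] :
    ∀ (l : List (Sym2 V)), (∀ x ∈ l, 0 ≤ w x) → ∑ x ∈ l.toFinset, w x ≤ (l.map w).sum
  | [], _ => by simp
  | a :: l, h => by
    have IH := toFinset_sum_le l (fun x hx => h x (List.mem_cons_of_mem a hx))
    simp only [List.toFinset_cons, List.map_cons, List.sum_cons]
    by_cases ha : a ∈ l.toFinset
    · rw [Finset.insert_eq_self.mpr ha]
      have := h a List.mem_cons_self
      linarith
    · rw [Finset.sum_insert ha]
      linarith

lemma sublist_sum_le {w : Sym2 V → ℝ} [DecidableEq (Sym2 V)] {l₁ l₂ : List (Sym2 V)}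
    (h₁ : l₁.Nodup) (hsub : l₁ ⊆ l₂) (hnn : ∀ x ∈ l₂, 0 ≤ w x) :
    (l₁.map w).sum ≤ (l₂.map w).sum := by
  rw [← List.sum_toFinset w h₁]
  calc ∑ x ∈ l₁.toFinset, w x ≤ ∑ x ∈ l₂.toFinset, w x := by
        apply Finset.sum_le_sum_of_subset_of_nonneg
        · intro x hx
          exact List.mem_toFinset.mpr (hsub (List.mem_toFinset.mp hx))
        · intro x hx _
          exact hnn x (List.mem_toFinset.mp hx)
    _ ≤ (l₂.map w).sum := toFinset_sum_le l₂ hnn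

lemma bypass_weight_le {G : SimpleGraph V} [DecidableEq V] {w : Sym2 V → ℝ}
    (hw : PosWeights G w) {a b : V} (p : G.Walk a b) :
    walkWeight G w p.bypass ≤ walkWeight G w p := by
  classical
  exact sublist_sum_le p.bypass_isPath.edges_nodup p.edges_bypass_subset
    (fun x hx => (hw x (p.edges_subset_edgeSet hx)).le)

lemma single_edge_isPath {G : SimpleGraph V} {a b : V} (h : G.Adj a b) :
    (SimpleGraph.Walk.cons h SimpleGraph.Walk.nil).IsPath := by
  simp [SimpleGraph.Walk.isPath_def, h.ne]

lemma lift_posWeights {n : ℕ} {D : Fin n → Fin n → ℝ} (hsym : ∀ i j, D i j = D j i)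
    (hpos : ∀ i j : Fin n, i ≠ j → 0 < D i j) :
    PosWeights (⊤ : SimpleGraph (Fin n)) (Sym2.lift ⟨D, hsym⟩) := by
  intro e he
  induction e with
  | _ x y =>
    rw [SimpleGraph.mem_edgeSet, SimpleGraph.top_adj] at he
    simpa using hpos x y he

lemma chain_lower {n : ℕ} {D : Fin n → Fin n → ℝ} (hsym : ∀ i j, D i j = D j i)
    (hpos : ∀ i j : Fin n, i ≠ j → 0 < D i j) (htri : TriangleIneq D) :
    ∀ {i j : Fin n} (p : (⊤ : SimpleGraph (Fin n)).Walk i j), i ≠ j →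
      D i j ≤ walkWeight ⊤ (Sym2.lift ⟨D, hsym⟩) p := by
  intro i j p
  induction p with
  | nil => intro h; exact absurd rfl h
  | @cons u k v h q ih =>
    intro huv
    rw [walkWeight_cons, Sym2.lift_mk]
    have huk : u ≠ k := h.ne
    have hwq : 0 ≤ walkWeight ⊤ (Sym2.lift ⟨D, hsym⟩) q :=
      walkWeight_nonneg (lift_posWeights hsym hpos) q
    by_cases hkv : k = v
    · subst hkv; linarith
    · have h1 := htri u v k huv (Ne.symm hkv) huk
      have h2 := ih hkv
      linarith

lemma wdist_eq_lift {n : ℕ} {D : Fin n → Fin n → ℝ} (hsym : ∀ i j, D i j = D j i)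
    (hpos : ∀ i j : Fin n, i ≠ j → 0 < D i j) (htri : TriangleIneq D)
    {i j : Fin n} (hij : i ≠ j) :
    wdist (⊤ : SimpleGraph (Fin n)) (Sym2.lift ⟨D, hsym⟩) i j = D i j := by
  have hadj : (⊤ : SimpleGraph (Fin n)).Adj i j := by simpa using hij
  apply le_antisymm
  · have := wdist_le ⊤ (Sym2.lift ⟨D, hsym⟩) (SimpleGraph.Walk.cons hadj SimpleGraph.Walk.nil)
      (single_edge_isPath hadj)
    simpa [walkWeight_cons, walkWeight] using this
  · rw [wdist]
    apply le_csInf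
    · exact ⟨_, SimpleGraph.Walk.cons hadj SimpleGraph.Walk.nil, single_edge_isPath hadj, rfl⟩
    · rintro x ⟨p, hp, rfl⟩
      exact chain_lower hsym hpos htri p hij

/-- A family satisfying the triangle inequalities is co-graphlike iff all its elements are
indecomposable. -/
theorem stmt_10 {n : ℕ} (hn : 2 ≤ n) (D : Fin n → Fin n → ℝ)
    (hsym : ∀ i j, D i j = D j i) (hpos : ∀ i j : Fin n, i ≠ j → 0 < D i j)
    (htri : TriangleIneq D) :
    (∃ w : Sym2 (Fin n) → ℝ, PosWeights (⊤ : SimpleGraph (Fin n)) w ∧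
        Pruned (⊤ : SimpleGraph (Fin n)) w ∧
        ∀ i j : Fin n, i ≠ j → wdist (⊤ : SimpleGraph (Fin n)) w i j = D i j) ↔
      ∀ i j : Fin n, i ≠ j → FIndec D i j := by
  constructor
  · -- forward: co-graphlike → indecomposable
    rintro ⟨w, hw, hpr, hwd⟩ i j hij z hzi hzj
    by_contra hlt
    push_neg at hlt
    have heq : D i j = D i z + D z j :=
      le_antisymm (htri i j z hij (Ne.symm hzj) (Ne.symm hzi)) hlt
    have he : s(i, j) ∈ (⊤ : SimpleGraph (Fin n)).edgeSet := by
      rw [SimpleGraph.mem_edgeSet, SimpleGraph.top_adj]; exact hij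
    obtain ⟨a, b, hab, hall⟩ := hpr s(i, j) he
    have hadjab : (⊤ : SimpleGraph (Fin n)).Adj a b := by simpa using hab
    obtain ⟨p, hp, hpw⟩ := exists_realizes ⊤ w
      (SimpleGraph.Walk.cons hadjab SimpleGraph.Walk.nil) (single_edge_isPath hadjab)
    have hep : s(i, j) ∈ p.edges := hall p ⟨hp, hpw⟩
    obtain ⟨x, y, hxy, q, r, hexy, hpe⟩ := walk_split p hep
    have hxyne : x ≠ y := hxy.ne
    obtain ⟨hxz, hzy, hsum, hxyD⟩ :
        x ≠ z ∧ z ≠ y ∧ D x z + D z y = D i j ∧ D x y = D i j := by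
      rcases Sym2.eq_iff.mp hexy with ⟨rfl, rfl⟩ | ⟨rfl, rfl⟩
      · exact ⟨Ne.symm hzi, hzj, heq.symm, rfl⟩
      · refine ⟨Ne.symm hzj, hzi, ?_, hsym x y⟩
        rw [hsym x z, hsym z y]; linarith
    -- w s(i,j) ≥ D i j
    have hle : D x y ≤ w s(i, j) := by
      have h1 := wdist_le ⊤ w (SimpleGraph.Walk.cons hxy SimpleGraph.Walk.nil)
        (single_edge_isPath hxy)
      rw [hwd x y hxyne] at h1
      simpa [walkWeight_cons, walkWeight, hexy] using h1
    -- realizing paths x→z and z→y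
    have hadjxz : (⊤ : SimpleGraph (Fin n)).Adj x z := by simpa using hxz
    have hadjzy : (⊤ : SimpleGraph (Fin n)).Adj z y := by simpa using hzy
    obtain ⟨rxz, hrxz, hrxzw⟩ := exists_realizes ⊤ w
      (SimpleGraph.Walk.cons hadjxz SimpleGraph.Walk.nil) (single_edge_isPath hadjxz)
    obtain ⟨rzy, hrzy, hrzyw⟩ := exists_realizes ⊤ w
      (SimpleGraph.Walk.cons hadjzy SimpleGraph.Walk.nil) (single_edge_isPath hadjzy)
    have hrxzD : walkWeight ⊤ w rxz = D x z := by rw [hrxzw, hwd x z hxz]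
    have hrzyD : walkWeight ⊤ w rzy = D z y := by rw [hrzyw, hwd z y hzy]
    have hpzy : 0 < D z y := hpos z y hzy
    have hpxz : 0 < D x z := hpos x z hxz
    have hnot1 : s(i, j) ∉ rxz.edges := by
      intro hmem
      have h2 := weight_edge_le hw hmem
      rw [hrxzD] at h2
      linarith
    have hnot2 : s(i, j) ∉ rzy.edges := by
      intro hmem
      have h2 := weight_edge_le hw hmem
      rw [hrzyD] at h2
      linarith
    have hnd := hp.edges_nodup
    rw [hpe, SimpleGraph.Walk.edges_append, SimpleGraph.Walk.edges_cons, hexy] at hnd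
    have hnotq : s(i, j) ∉ q.edges := fun hmem =>
      (List.disjoint_of_nodup_append hnd) hmem List.mem_cons_self
    have hnotr : s(i, j) ∉ r.edges :=
      (List.nodup_cons.mp (List.nodup_append'.mp hnd).2.1).1
    -- the rerouted walk
    set q' : (⊤ : SimpleGraph (Fin n)).Walk a b :=
      q.append (rxz.append (rzy.append r)) with hq'
    have hq'w : walkWeight ⊤ w q' ≤ wdist ⊤ w a b := by
      have hpw' : walkWeight ⊤ w p
          = walkWeight ⊤ w q + w s(i, j) + walkWeight ⊤ w r := by
        rw [hpe, walkWeight_append, walkWeight_cons, hexy]; ring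
      have hq'e : walkWeight ⊤ w q'
          = walkWeight ⊤ w q + D x z + D z y + walkWeight ⊤ w r := by
        rw [hq', walkWeight_append, walkWeight_append, walkWeight_append, hrxzD, hrzyD]; ring
      rw [← hpw]
      linarith
    have hbp := bypass_weight_le hw q'
    have hbl := wdist_le ⊤ w q'.bypass q'.bypass_isPath
    have hreal : Realizes ⊤ w q'.bypass := ⟨q'.bypass_isPath, le_antisymm (hbp.trans hq'w) hbl⟩
    have hmem2 := q'.edges_bypass_subset (hall q'.bypass hreal)
    rw [hq'] at hmem2
    simp only [SimpleGraph.Walk.edges_append, List.mem_append] at hmem2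
    tauto
  · -- backward: indecomposable → co-graphlike
    intro hindec
    refine ⟨Sym2.lift ⟨D, hsym⟩, lift_posWeights hsym hpos, ?_, ?_⟩
    · intro e he
      induction e with
      | _ a b =>
        rw [SimpleGraph.mem_edgeSet, SimpleGraph.top_adj] at he
        refine ⟨a, b, he, ?_⟩
        rintro p ⟨hp, hpw⟩
        cases p with
        | nil => exact absurd rfl he
        | @cons u k v h q =>
          by_cases hkb : k = b
          · subst hkb
            simp [SimpleGraph.Walk.edges_cons]
          · exfalso
            have hak : a ≠ k := h.ne
            have hq : D k b ≤ walkWeight ⊤ (Sym2.lift ⟨D, hsym⟩) q :=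
              chain_lower hsym hpos htri q hkb
            have hcw : walkWeight ⊤ (Sym2.lift ⟨D, hsym⟩) (SimpleGraph.Walk.cons h q)
                = D a k + walkWeight ⊤ (Sym2.lift ⟨D, hsym⟩) q := by
              rw [walkWeight_cons, Sym2.lift_mk]
            have hpw' : walkWeight ⊤ (Sym2.lift ⟨D, hsym⟩) (SimpleGraph.Walk.cons h q)
                = D a b := by rw [hpw, wdist_eq_lift hsym hpos htri he]
            have hind := hindec a b he k (Ne.symm hak) hkb
            linarith
    · intro i j hij
      exact wdist_eq_lift hsym hpos htri hij
end

section
/- Let {D_I}_{I∈({1,...,n} choose 2)} be a family of positive real numbers that is bigraphlike on subsets X,Y ⊂ [n]. Then the family is co-bigraphlike on X and Y (i.e., realized by a pruned positive-weighted complete bipartite graph on X and Y) if and only if D_{i,j} is indecomposable for all i ∈ X and j ∈ Y. -/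
open SimpleGraph

variable {V : Type*}

section AuxLemmas

variable {G : SimpleGraph V} {w : Sym2 V → ℝ}

lemma ww_nil {u : V} : walkWeight G w (Walk.nil : G.Walk u u) = 0 := by simp [walkWeight]

lemma ww_cons {u v x : V} (h : G.Adj u v) (p : G.Walk v x) :
    walkWeight G w (Walk.cons h p) = w s(u, v) + walkWeight G w p := by simp [walkWeight]

lemma ww_append {u v x : V} (p : G.Walk u v) (q : G.Walk v x) :
    walkWeight G w (p.append q) = walkWeight G w p + walkWeight G w q := by
  simp [walkWeight, Walk.edges_append]

lemma ww_reverse {u v : V} (p : G.Walk u v) :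
    walkWeight G w p.reverse = walkWeight G w p := by
  simp [walkWeight, Walk.edges_reverse, List.sum_reverse]

lemma ww_nonneg {u v : V} (p : G.Walk u v) (h : ∀ e ∈ p.edges, 0 ≤ w e) :
    0 ≤ walkWeight G w p := by
  apply List.sum_nonneg
  intro x hx
  obtain ⟨e, he, rfl⟩ := List.mem_map.mp hx
  exact h e he

lemma exists_path_le [DecidableEq V] {u v : V} (p : G.Walk u v) (hw : ∀ e ∈ p.edges, 0 ≤ w e) :
    ∃ q : G.Walk u v, q.IsPath ∧ (∀ e ∈ q.edges, e ∈ p.edges) ∧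
      walkWeight G w q ≤ walkWeight G w p := by
  induction p with
  | nil => exact ⟨Walk.nil, Walk.IsPath.nil, by simp, le_rfl⟩
  | @cons a c b h p ih =>
    obtain ⟨q, hq, hsub, hle⟩ := ih (fun e he => hw e (by simp [he]))
    have hw' : ∀ e ∈ q.edges, 0 ≤ w e := fun e he => hw e (by simp [hsub e he])
    have hea : (0:ℝ) ≤ w s(a, c) := hw _ (by simp)
    by_cases hu : a ∈ q.support
    · refine ⟨q.dropUntil a hu, hq.dropUntil hu, ?_, ?_⟩
      · intro e he
        have := Walk.edges_dropUntil_subset q hu he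
        simp [hsub e this]
      · have hsplit := congrArg (walkWeight G w) (q.take_spec hu)
        rw [ww_append] at hsplit
        have h0 : 0 ≤ walkWeight G w (q.takeUntil a hu) :=
          ww_nonneg _ (fun e he => hw' e (Walk.edges_takeUntil_subset q hu he))
        rw [ww_cons]
        linarith
    · refine ⟨Walk.cons h q, (Walk.cons_isPath_iff _ _).2 ⟨hq, hu⟩, ?_, ?_⟩
      · intro e he
        simp only [Walk.edges_cons, List.mem_cons] at he ⊢
        rcases he with he | he
        · exact Or.inl he
        · exact Or.inr (hsub e he)
      · rw [ww_cons, ww_cons]; linarith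

lemma wdist_le_path (hw : PosWeights G w) {i j : V} {q : G.Walk i j} (hq : q.IsPath) :
    wdist G w i j ≤ walkWeight G w q := by
  apply csInf_le
  · refine ⟨0, ?_⟩
    rintro x ⟨p, hp, rfl⟩
    exact ww_nonneg p (fun e he => (hw e (p.edges_subset_edgeSet he)).le)
  · exact ⟨q, hq, rfl⟩

lemma wdist_le_walk [DecidableEq V] (hw : PosWeights G w) {i j : V} (p : G.Walk i j) :
    wdist G w i j ≤ walkWeight G w p := by
  obtain ⟨q, hq, _, hle⟩ := exists_path_le p (fun e he => (hw e (p.edges_subset_edgeSet he)).le)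
  exact (wdist_le_path hw hq).trans hle

lemma exists_realizes_s14 [Fintype V] [DecidableEq V] (hw : PosWeights G w) (hc : G.Connected)
    (i j : V) : ∃ p : G.Walk i j, Realizes G w p := by
  classical
  haveI : DecidableRel G.Adj := Classical.decRel _
  have hfin : Set.Finite {x : ℝ | ∃ p : G.Walk i j, p.IsPath ∧ walkWeight G w p = x} := by
    have heq : {x : ℝ | ∃ p : G.Walk i j, p.IsPath ∧ walkWeight G w p = x} =
        Set.range (fun p : G.Path i j => walkWeight G w (p : G.Walk i j)) := by
      ext x
      constructor
      · rintro ⟨p, hp, rfl⟩; exact ⟨⟨p, hp⟩, rfl⟩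
      · rintro ⟨p, rfl⟩; exact ⟨p.1, p.2, rfl⟩
    rw [heq]; exact Set.finite_range _
  have hne : Set.Nonempty {x : ℝ | ∃ p : G.Walk i j, p.IsPath ∧ walkWeight G w p = x} := by
    obtain ⟨p0⟩ := hc.preconnected i j
    obtain ⟨q, hq, _, _⟩ := exists_path_le p0 (fun e he => (hw e (p0.edges_subset_edgeSet he)).le)
    exact ⟨_, q, hq, rfl⟩
  obtain ⟨p, hp, hx⟩ := hne.csInf_mem hfin
  exact ⟨p, hp, hx⟩

lemma wdist_triangle [Fintype V] [DecidableEq V] (hw : PosWeights G w) (hc : G.Connected)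
    (i z j : V) : wdist G w i j ≤ wdist G w i z + wdist G w z j := by
  obtain ⟨p, _, hp⟩ := exists_realizes_s14 hw hc i z
  obtain ⟨q, _, hq⟩ := exists_realizes_s14 hw hc z j
  have := wdist_le_walk hw (p.append q)
  rw [ww_append, hp, hq] at this
  exact this

lemma wdist_le_edge (hw : PosWeights G w) {i j : V} (h : G.Adj i j) :
    wdist G w i j ≤ w s(i, j) := by
  have hpath : (Walk.cons h Walk.nil).IsPath := by
    rw [Walk.cons_isPath_iff]
    exact ⟨Walk.IsPath.nil, by simp [h.ne]⟩
  have := wdist_le_path hw hpath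
  rwa [ww_cons, ww_nil, add_zero] at this

lemma chain_lb {D : V → V → ℝ} (hw : PosWeights G w)
    (hDtri : ∀ a b c : V, a ≠ b → b ≠ c → a ≠ c → D a c ≤ D a b + D b c)
    (hwD : ∀ a b : V, G.Adj a b → w s(a, b) = D a b) :
    ∀ (i j : V), i ≠ j → ∀ (p : G.Walk i j), D i j ≤ walkWeight G w p := by
  suffices H : ∀ (i j : V) (p : G.Walk i j), i ≠ j → D i j ≤ walkWeight G w p by
    exact fun i j hij p => H i j p hij
  intro i j p
  induction p with
  | nil => intro h; exact absurd rfl h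
  | @cons a c b h p ih =>
    intro hab
    rw [ww_cons, hwD a c h]
    by_cases hcb : c = b
    · subst hcb
      have h0 : 0 ≤ walkWeight G w p :=
        ww_nonneg p (fun e he => (hw e (p.edges_subset_edgeSet he)).le)
      linarith
    · have h1 := ih hcb
      have h2 := hDtri a c b h.ne hcb hab
      linarith

lemma splice {i j : V} : ∀ {a b : V} (P : G.Walk a b), P.IsTrail → s(i, j) ∈ P.edges →
    ∀ (R : G.Walk i j), s(i, j) ∉ R.edges →
    ∃ W : G.Walk a b, s(i, j) ∉ W.edges ∧
      walkWeight G w W = walkWeight G w P - w s(i, j) + walkWeight G w R := by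
  intro a b P
  induction P with
  | nil => intro _ he; simp at he
  | @cons a c b h P ih =>
    intro ht he R hR
    rw [Walk.edges_cons, List.mem_cons] at he
    rw [Walk.isTrail_cons] at ht
    rcases he with he | he
    · rw [Sym2.eq_iff] at he
      rcases he with ⟨rfl, rfl⟩ | ⟨rfl, rfl⟩
      · refine ⟨R.append P, ?_, ?_⟩
        · intro hmem
          rw [Walk.edges_append, List.mem_append] at hmem
          rcases hmem with hm | hm
          · exact hR hm
          · exact ht.2 hm
        · rw [ww_append, ww_cons]; ring
      · refine ⟨R.reverse.append P, ?_, ?_⟩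
        · intro hmem
          rw [Walk.edges_append, List.mem_append, Walk.edges_reverse, List.mem_reverse] at hmem
          rcases hmem with hm | hm
          · exact hR hm
          · exact ht.2 (by rw [Sym2.eq_swap]; exact hm)
        · rw [ww_append, ww_reverse, ww_cons]
          have hswap : w s(j, i) = w s(i, j) := by rw [Sym2.eq_swap]
          rw [hswap]; ring
    · obtain ⟨W', hW1, hW2⟩ := ih ht.1 he R hR
      refine ⟨Walk.cons h W', ?_, ?_⟩
      · intro hmem
        rw [Walk.edges_cons, List.mem_cons] at hmem
        rcases hmem with hmem | hmem
        · exact ht.2 (hmem ▸ he)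
        · exact hW1 hmem
      · rw [ww_cons, ww_cons, hW2]; ring

end AuxLemmas

/-- A family which is bigraphlike on `X`, `Y` is co-bigraphlike on `X` and `Y` iff `D i j`
is indecomposable for all `i ∈ X`, `j ∈ Y`. -/
theorem stmt_14 {n : ℕ} (hn : 2 ≤ n) (D : Fin n → Fin n → ℝ)
    (hsym : ∀ i j, D i j = D j i) (hpos : ∀ i j : Fin n, i ≠ j → 0 < D i j)
    (X Y : Set (Fin n))
    (hbig : ∃ (B : SimpleGraph (Fin n)) (w : Sym2 (Fin n) → ℝ),
      IsBipartiteOn B X Y ∧ B.Connected ∧ PosWeights B w ∧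
      ∀ i j : Fin n, i ≠ j → wdist B w i j = D i j) :
    (∃ (B : SimpleGraph (Fin n)) (w : Sym2 (Fin n) → ℝ),
        IsBipartiteOn B X Y ∧ (∀ i ∈ X, ∀ j ∈ Y, B.Adj i j) ∧ Pruned B w ∧
        B.Connected ∧ PosWeights B w ∧
        ∀ i j : Fin n, i ≠ j → wdist B w i j = D i j) ↔
      ∀ i ∈ X, ∀ j ∈ Y, FIndec D i j := by
  obtain ⟨B0, w0, hbip0, hconn0, hpos0, hreal0⟩ := hbig
  have hdisj := hbip0.1
  have huniv := hbip0.2.1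
  have hedges := hbip0.2.2
  have hnXY : ∀ v : Fin n, v ∈ X → v ∈ Y → False := fun v h1 h2 => by
    have hv : v ∈ X ∩ Y := ⟨h1, h2⟩
    rw [hdisj] at hv
    exact hv
  constructor
  · rintro ⟨B, w, hbip, hcompl, hpruned, hconn, hposW, hreal⟩ i hiX j hjY z hzi hzj
    have hij : i ≠ j := fun h => hnXY j (h ▸ hiX) hjY
    have hadj : B.Adj i j := hcompl i hiX j hjY
    by_contra hlt
    push_neg at hlt
    have htri : wdist B w i j ≤ wdist B w i z + wdist B w z j :=
      wdist_triangle hposW hconn i z j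
    rw [hreal i j hij, hreal i z (Ne.symm hzi), hreal z j hzj] at htri
    have heq : D i j = D i z + D z j := le_antisymm htri hlt
    obtain ⟨P1, hP1p, hP1w⟩ := exists_realizes_s14 hposW hconn i z
    obtain ⟨P2, hP2p, hP2w⟩ := exists_realizes_s14 hposW hconn z j
    have hWw : walkWeight B w (P1.append P2) = D i j := by
      rw [ww_append, hP1w, hP2w, hreal i z (Ne.symm hzi), hreal z j hzj, heq]
    obtain ⟨R, hRp, hRsub, hRle⟩ := exists_path_le (P1.append P2)
      (fun e he => (hposW e ((P1.append P2).edges_subset_edgeSet he)).le)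
    have hRge : wdist B w i j ≤ walkWeight B w R := wdist_le_path hposW hRp
    have hRw : walkWeight B w R = D i j := by
      refine le_antisymm (hWw ▸ hRle) ?_
      rw [← hreal i j hij]; exact hRge
    have hnotin : s(i, j) ∉ R.edges := by
      intro hmem
      have hm0 := hRsub _ hmem
      rw [Walk.edges_append, List.mem_append] at hm0
      rcases hm0 with hm | hm
      · have hjs : j ∈ P1.support := P1.snd_mem_support_of_mem_edges hm
        have hsp := congrArg (walkWeight B w) (P1.take_spec hjs)
        rw [ww_append] at hsp
        have h1 : wdist B w i j ≤ walkWeight B w (P1.takeUntil j hjs) :=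
          wdist_le_path hposW (hP1p.takeUntil hjs)
        have h2 : wdist B w j z ≤ walkWeight B w (P1.dropUntil j hjs) :=
          wdist_le_path hposW (hP1p.dropUntil hjs)
        rw [hreal i j hij] at h1
        rw [hreal j z (Ne.symm hzj)] at h2
        have hP1D : walkWeight B w P1 = D i z := by rw [hP1w, hreal i z (Ne.symm hzi)]
        have hjz : D j z = D z j := hsym j z
        have hDzj : 0 < D z j := hpos z j hzj
        linarith
      · have his : i ∈ P2.support := P2.fst_mem_support_of_mem_edges hm
        have hsp := congrArg (walkWeight B w) (P2.take_spec his)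
        rw [ww_append] at hsp
        have h1 : wdist B w z i ≤ walkWeight B w (P2.takeUntil i his) :=
          wdist_le_path hposW (hP2p.takeUntil his)
        have h2 : wdist B w i j ≤ walkWeight B w (P2.dropUntil i his) :=
          wdist_le_path hposW (hP2p.dropUntil his)
        rw [hreal z i hzi] at h1
        rw [hreal i j hij] at h2
        have hP2D : walkWeight B w P2 = D z j := by rw [hP2w, hreal z j hzj]
        have hzi' : D z i = D i z := hsym z i
        have hDiz : 0 < D i z := hpos i z (Ne.symm hzi)
        linarith
    obtain ⟨a, b, hab, hall⟩ := hpruned s(i, j) (B.mem_edgeSet.mpr hadj)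
    obtain ⟨Pa, hPap, hPaw⟩ := exists_realizes_s14 hposW hconn a b
    have hePa : s(i, j) ∈ Pa.edges := hall Pa ⟨hPap, hPaw⟩
    obtain ⟨W, hWnot, hWw2⟩ := splice Pa hPap.isTrail hePa R hnotin
    have hwe : D i j ≤ w s(i, j) := by
      rw [← hreal i j hij]; exact wdist_le_edge hposW hadj
    obtain ⟨Q, hQp, hQsub, hQle⟩ := exists_path_le W
      (fun e he => (hposW e (W.edges_subset_edgeSet he)).le)
    have hQw : walkWeight B w Q = wdist B w a b := by
      refine le_antisymm ?_ (wdist_le_path hposW hQp)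
      rw [← hPaw]
      calc walkWeight B w Q ≤ walkWeight B w W := hQle
        _ = walkWeight B w Pa - w s(i, j) + walkWeight B w R := hWw2
        _ ≤ walkWeight B w Pa := by rw [hRw]; linarith
    have hQin := hall Q ⟨hQp, hQw⟩
    exact hWnot (hQsub _ hQin)
  · intro hindec
    have hDtri : ∀ a b c : Fin n, a ≠ b → b ≠ c → a ≠ c → D a c ≤ D a b + D b c := by
      intro a b c hab hbc hac
      have := wdist_triangle hpos0 hconn0 a b c
      rwa [hreal0 a c hac, hreal0 a b hab, hreal0 b c hbc] at this
    have hmem : ∀ v : Fin n, v ∈ X ∨ v ∈ Y := fun v => by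
      have hv : v ∈ X ∪ Y := by rw [huniv]; trivial
      exact hv
    -- both sides are nonempty
    have hXYne : ∃ x0 ∈ X, ∃ y0 ∈ Y, True := by
      obtain ⟨p⟩ := hconn0.preconnected ⟨0, by omega⟩ ⟨1, by omega⟩
      cases p with
      | cons h _ =>
        rcases hedges _ _ h with ⟨h1, h2⟩ | ⟨h1, h2⟩
        · exact ⟨_, h1, _, h2, trivial⟩
        · exact ⟨_, h2, _, h1, trivial⟩
    obtain ⟨x0, hx0, y0, hy0, -⟩ := hXYne
    -- decomposition of same-side distances through the other side
    have hdecomp : ∀ i j : Fin n, i ≠ j → (i ∈ X ∧ j ∈ X) ∨ (i ∈ Y ∧ j ∈ Y) →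
        ∃ c : Fin n, ((i ∈ X ∧ c ∈ Y) ∨ (i ∈ Y ∧ c ∈ X)) ∧ c ≠ i ∧ c ≠ j ∧
          D i j = D i c + D c j := by
      intro i j hij hsame
      obtain ⟨P, hPp, hPw⟩ := exists_realizes_s14 hpos0 hconn0 i j
      cases P with
      | nil => exact absurd rfl hij
      | @cons _ c _ h P' =>
        have hside := hedges _ _ h
        have hci : c ≠ i := h.ne'
        have hcj : c ≠ j := by
          intro hh
          subst hh
          rcases hsame with ⟨hi, hj⟩ | ⟨hi, hj⟩
          · rcases hside with ⟨-, hc⟩ | ⟨hi', -⟩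
            · exact hnXY c hj hc
            · exact hnXY i hi hi'
          · rcases hside with ⟨hi', -⟩ | ⟨-, hc⟩
            · exact hnXY i hi' hi
            · exact hnXY c hc hj
        have h1 : wdist B0 w0 i c ≤ w0 s(i, c) := wdist_le_edge hpos0 h
        have h2 : wdist B0 w0 c j ≤ walkWeight B0 w0 P' := wdist_le_walk hpos0 P'
        rw [hreal0 i c h.ne] at h1
        rw [hreal0 c j hcj] at h2
        have hw' : w0 s(i, c) + walkWeight B0 w0 P' = D i j := by
          rw [← ww_cons h, hPw, hreal0 i j hij]
        have htri := hDtri i c j h.ne hcj hij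
        exact ⟨c, hside, hci, hcj, by linarith⟩
    -- the complete bipartite graph
    set Bc : SimpleGraph (Fin n) :=
      { Adj := fun a b => (a ∈ X ∧ b ∈ Y) ∨ (a ∈ Y ∧ b ∈ X)
        symm := by refine ⟨?_⟩; rintro a b (⟨h1, h2⟩ | ⟨h1, h2⟩)
                   · exact Or.inr ⟨h2, h1⟩
                   · exact Or.inl ⟨h2, h1⟩
        loopless := by
          refine ⟨?_⟩; rintro a (⟨h1, h2⟩ | ⟨h1, h2⟩)
          exacts [hnXY a h1 h2, hnXY a h2 h1] } with hBcdef
    set wc : Sym2 (Fin n) → ℝ := Sym2.lift ⟨fun a b => D a b, hsym⟩ with hwcdef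
    have hBadj : ∀ a b : Fin n, Bc.Adj a b ↔ ((a ∈ X ∧ b ∈ Y) ∨ (a ∈ Y ∧ b ∈ X)) :=
      fun a b => Iff.rfl
    have hwc : ∀ a b : Fin n, wc s(a, b) = D a b := fun a b => Sym2.lift_mk _ _ _
    have hposc : PosWeights Bc wc := by
      intro e he
      revert he
      refine e.ind ?_
      intro a b he
      rw [SimpleGraph.mem_edgeSet] at he
      rw [hwc]
      exact hpos a b he.ne
    have hconnc : Bc.Connected := by
      rw [connected_iff]
      refine ⟨?_, ⟨⟨0, by omega⟩⟩⟩
      have hre : ∀ v : Fin n, Bc.Reachable v y0 := by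
        intro v
        rcases hmem v with hv | hv
        · exact (show Bc.Adj v y0 from Or.inl ⟨hv, hy0⟩).reachable
        · exact ((show Bc.Adj v x0 from Or.inr ⟨hv, hx0⟩).reachable).trans
            (show Bc.Adj x0 y0 from Or.inl ⟨hx0, hy0⟩).reachable
      intro u v
      exact (hre u).trans (hre v).symm
    have hlb : ∀ (i j : Fin n), i ≠ j → ∀ p : Bc.Walk i j, D i j ≤ walkWeight Bc wc p :=
      chain_lb hposc hDtri (fun a b _ => hwc a b)
    have hrealc : ∀ i j : Fin n, i ≠ j → wdist Bc wc i j = D i j := by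
      intro i j hij
      have hne : Set.Nonempty {x : ℝ | ∃ p : Bc.Walk i j, p.IsPath ∧ walkWeight Bc wc p = x} := by
        obtain ⟨p0⟩ := hconnc.preconnected i j
        obtain ⟨q, hq, -, -⟩ := exists_path_le p0
          (fun e he => (hposc e (p0.edges_subset_edgeSet he)).le)
        exact ⟨_, q, hq, rfl⟩
      have hlbI : D i j ≤ wdist Bc wc i j :=
        le_csInf hne (by rintro x ⟨p, hp, rfl⟩; exact hlb i j hij p)
      refine le_antisymm ?_ hlbI
      have hcross : ∀ c : Fin n, c ≠ i → c ≠ j → Bc.Adj i c → Bc.Adj c j →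
          D i j = D i c + D c j → wdist Bc wc i j ≤ D i j := by
        intro c hci hcj hadj1 hadj2 hDij
        have hinner : (Walk.cons hadj2 Walk.nil : Bc.Walk c j).IsPath := by
          rw [Walk.cons_isPath_iff]
          exact ⟨Walk.IsPath.nil, by simp [hcj]⟩
        have hpath : (Walk.cons hadj1 (Walk.cons hadj2 Walk.nil)).IsPath := by
          rw [Walk.cons_isPath_iff]
          refine ⟨hinner, ?_⟩
          intro hmemi
          simp only [Walk.support_cons, Walk.support_nil, List.mem_cons,
            List.mem_singleton, List.not_mem_nil, or_false] at hmemi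
          rcases hmemi with h' | h'
          · exact hci h'.symm
          · exact hij h'
        have hle := wdist_le_path hposc hpath
        rw [ww_cons, ww_cons, ww_nil, hwc, hwc, add_zero] at hle
        rw [hDij]
        exact hle
      rcases hmem i with hi | hi <;> rcases hmem j with hj | hj
      · obtain ⟨c, hside, hci, hcj, hDij⟩ := hdecomp i j hij (Or.inl ⟨hi, hj⟩)
        have hcY : c ∈ Y := by
          rcases hside with ⟨-, hc⟩ | ⟨hi', -⟩
          · exact hc
          · exact absurd hi' (fun hi'' => hnXY i hi hi'')
        exact hcross c hci hcj (Or.inl ⟨hi, hcY⟩) (Or.inr ⟨hcY, hj⟩) hDij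
      · have := wdist_le_edge hposc (show Bc.Adj i j from Or.inl ⟨hi, hj⟩)
        rwa [hwc] at this
      · have := wdist_le_edge hposc (show Bc.Adj i j from Or.inr ⟨hi, hj⟩)
        rwa [hwc] at this
      · obtain ⟨c, hside, hci, hcj, hDij⟩ := hdecomp i j hij (Or.inr ⟨hi, hj⟩)
        have hcX : c ∈ X := by
          rcases hside with ⟨hi', -⟩ | ⟨-, hc⟩
          · exact absurd hi' (fun hi'' => hnXY i hi'' hi)
          · exact hc
        exact hcross c hci hcj (Or.inr ⟨hi, hcX⟩) (Or.inl ⟨hcX, hj⟩) hDij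
    have hprun : Pruned Bc wc := by
      intro e he
      revert he
      refine e.ind ?_
      intro a b he
      rw [SimpleGraph.mem_edgeSet] at he
      have hab : a ≠ b := he.ne
      have hstrict : ∀ c : Fin n, c ≠ a → c ≠ b → D a b < D a c + D c b := by
        rcases he with ⟨ha, hb⟩ | ⟨ha, hb⟩
        · exact fun c h1 h2 => hindec a ha b hb c h1 h2
        · intro c h1 h2
          have hthis := hindec b hb a ha c h2 h1
          have e1 := hsym a b
          have e2 := hsym a c
          have e3 := hsym c b
          linarith
      refine ⟨a, b, hab, ?_⟩
      rintro P ⟨hPp, hPw⟩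
      rw [hrealc a b hab] at hPw
      cases P with
      | nil => exact absurd rfl hab
      | @cons _ c _ h P' =>
        by_cases hcb : c = b
        · subst hcb
          rw [Walk.edges_cons]
          exact List.mem_cons_self
        · exfalso
          have h1 : D c b ≤ walkWeight Bc wc P' := hlb c b hcb P'
          have h2 := hstrict c h.ne' hcb
          rw [ww_cons, hwc] at hPw
          linarith
    exact ⟨Bc, wc, ⟨hdisj, huniv, fun a b h => h⟩, fun i hi j hj => Or.inl ⟨hi, hj⟩,
      hprun, hconnc, hposc, hrealc⟩
end
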